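/- If the ground state Ψ of H_0 + V has density ρ with ρ_j = 0 at some vertex j, then for every t ≥ 0 the state Ψ remains a ground state of H_0 + V + t·V_j, where V_j is the potential operator for the potential that is 1 at vertex j and 0 elsewhere. In particular ρ is not uniquely v-representable. -/

import Mathlib

open scoped BigOperators

abbrev FIdx (M N : ℕ) := {I : Finset (Fin M) // I.card = N}

/-- Density of a fermionic state. -/
def density (M N : ℕ) (Ψ : FIdx M N → ℂ) (i : Fin M) : ℝ :=
  ∑ I : FIdx M N, if i ∈ I.1 then Complex.normSq (Ψ I) else 0

/-- The diagonal potential operator on `Λ^N ℂ^M` induced by `v ∈ ℝ^M`: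
`V e_I = (Σ_{i∈I} v_i) e_I`. -/
def Vmat (M N : ℕ) (v : Fin M → ℝ) : Matrix (FIdx M N) (FIdx M N) ℂ :=
  Matrix.diagonal fun I => ((∑ i ∈ I.1, v i : ℝ) : ℂ)

/-- The (real) quadratic form `⟨Ψ, HΨ⟩`. -/
noncomputable def quadForm (M N : ℕ) (H : Matrix (FIdx M N) (FIdx M N) ℂ) (Ψ : FIdx M N → ℂ) : ℝ :=
  (dotProduct (star Ψ) (H.mulVec Ψ)).re

/-- A ground state: a normalized minimizer of the quadratic form over the unit sphere. -/
def IsGroundState (M N : ℕ) (H : Matrix (FIdx M N) (FIdx M N) ℂ) (Ψ : FIdx M N → ℂ) : Prop :=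
  (∑ I : FIdx M N, Complex.normSq (Ψ I) = 1) ∧
  ∀ Φ : FIdx M N → ℂ, (∑ I : FIdx M N, Complex.normSq (Φ I) = 1) →
    quadForm M N H Ψ ≤ quadForm M N H Φ

lemma quad_add (M N : ℕ) (A B : Matrix (FIdx M N) (FIdx M N) ℂ) (Ψ : FIdx M N → ℂ) :
    quadForm M N (A + B) Ψ = quadForm M N A Ψ + quadForm M N B Ψ := by
  unfold quadForm
  rw [Matrix.add_mulVec, dotProduct_add, Complex.add_re]

lemma quad_V (M N : ℕ) (w : Fin M → ℝ) (Ψ : FIdx M N → ℂ) :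
    quadForm M N (Vmat M N w) Ψ
      = ∑ I : FIdx M N, (∑ i ∈ I.1, w i) * Complex.normSq (Ψ I) := by
  unfold quadForm Vmat dotProduct
  rw [Complex.re_sum]
  refine Finset.sum_congr rfl fun I _ => ?_
  rw [Matrix.mulVec_diagonal]
  have : (starRingEnd ℂ) (Ψ I) * (((∑ i ∈ I.1, w i : ℝ) : ℂ) * Ψ I)
      = (((∑ i ∈ I.1, w i) * Complex.normSq (Ψ I) : ℝ) : ℂ) := by
    push_cast
    rw [Complex.normSq_eq_conj_mul_self]
    ring
  simp only [Pi.star_apply, RCLike.star_def, this, Complex.ofReal_re]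

lemma quad_shift (M N : ℕ) (H0 : Matrix (FIdx M N) (FIdx M N) ℂ)
    (v : Fin M → ℝ) (t : ℝ) (j : Fin M) (Ψ : FIdx M N → ℂ) :
    quadForm M N (H0 + Vmat M N (fun i => v i + t * (if i = j then 1 else 0))) Ψ
      = quadForm M N (H0 + Vmat M N v) Ψ + t * density M N Ψ j := by
  rw [quad_add, quad_add, quad_V, quad_V, density, Finset.mul_sum]
  rw [add_assoc, ← Finset.sum_add_distrib]
  congr 1
  refine Finset.sum_congr rfl fun I _ => ?_
  rw [Finset.sum_add_distrib, ← Finset.mul_sum, Finset.sum_ite_eq' I.1 j (fun _ => (1:ℝ))]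
  by_cases hj : j ∈ I.1 <;> simp [hj] <;> ring

lemma density_nonneg (M N : ℕ) (Ψ : FIdx M N → ℂ) (j : Fin M) :
    0 ≤ density M N Ψ j := by
  apply Finset.sum_nonneg
  intro I _
  split <;> simp [Complex.normSq_nonneg]

/-- If the ground state `Ψ` of `H₀ + V` has density vanishing at vertex `j`, then for every
`t ≥ 0` the state `Ψ` remains a ground state of `H₀ + V + t·V_j` where `V_j` is the
potential concentrated at vertex `j`; in particular the density of `Ψ` is not uniquely
`v`-representable. -/
theorem zero_density_not_uv (M N : ℕ) (hN : 0 < N) (hNM : N < M)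
    (H0 : Matrix (FIdx M N) (FIdx M N) ℂ) (hH0 : H0.IsHermitian)
    (v : Fin M → ℝ) (Ψ : FIdx M N → ℂ) (j : Fin M)
    (hg : IsGroundState M N (H0 + Vmat M N v) Ψ)
    (hρ : density M N Ψ j = 0) :
    (∀ t : ℝ, 0 ≤ t →
      IsGroundState M N (H0 + Vmat M N (fun i => v i + t * (if i = j then 1 else 0))) Ψ) ∧
    ∃ v' : Fin M → ℝ,
      (∃ Ψ' : FIdx M N → ℂ, IsGroundState M N (H0 + Vmat M N v') Ψ' ∧
        density M N Ψ' = density M N Ψ) ∧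
      ¬ ∃ c : ℝ, ∀ i, v' i = v i + c := by
  constructor
  · intro t ht
    refine ⟨hg.1, fun Φ hΦ => ?_⟩
    rw [quad_shift, quad_shift, hρ, mul_zero, add_zero]
    calc quadForm M N (H0 + Vmat M N v) Ψ ≤ quadForm M N (H0 + Vmat M N v) Φ := hg.2 Φ hΦ
      _ ≤ _ := le_add_of_nonneg_right (mul_nonneg ht (density_nonneg M N Φ j))
  · refine ⟨fun i => v i + 1 * (if i = j then 1 else 0), ⟨Ψ, ?_, rfl⟩, ?_⟩
    · refine ⟨hg.1, fun Φ hΦ => ?_⟩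
      rw [quad_shift, quad_shift, hρ, mul_zero, add_zero]
      calc quadForm M N (H0 + Vmat M N v) Ψ ≤ quadForm M N (H0 + Vmat M N v) Φ := hg.2 Φ hΦ
        _ ≤ _ := le_add_of_nonneg_right (mul_nonneg zero_le_one (density_nonneg M N Φ j))
    · rintro ⟨c, hc⟩
      have h2 : 2 ≤ M := by omega
      haveI : Nontrivial (Fin M) := Fin.nontrivial_iff_two_le.mpr h2
      obtain ⟨i, hi⟩ := exists_ne j
      have h1 := hc j
      have h0 := hc i
      simp [hi] at h0 h1
      linarith
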